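/- Let K be a field and I ⊆ K[x₁,…,xₙ] a primary ideal. Then the collection of subsets J ⊆ {1,…,n} satisfying I ∩ K[x_j : j ∈ J] = {0} forms the independent sets of a matroid; in particular all maximal such subsets have the same cardinality. -/

import Mathlib

set_option synthInstance.maxHeartbeats 1000000
set_option maxHeartbeats 4000000

open IntermediateField Polynomial

section Helpers

variable {F L : Type*} [Field F] [Field L] [Algebra F L]

lemma aeval_mem_algebraAdjoin' {s : Set L} (r : MvPolynomial s F) :
    MvPolynomial.aeval (Subtype.val : s → L) r ∈ Algebra.adjoin F s := by
  have h : Algebra.adjoin F s = Algebra.adjoin F (Set.range (Subtype.val : s → L)) := by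
    rw [Subtype.range_coe]
  rw [h, Algebra.adjoin_range_eq_range_aeval]
  exact ⟨r, rfl⟩

lemma exists_denom' (s : Set L) {x : L} (hx : x ∈ adjoin F s) :
    ∃ d ∈ Algebra.adjoin F s, d ≠ 0 ∧ d * x ∈ Algebra.adjoin F s := by
  rw [IntermediateField.mem_adjoin_iff] at hx
  obtain ⟨r, q, rfl⟩ := hx
  by_cases hq : MvPolynomial.aeval (Subtype.val : s → L) q = 0
  · exact ⟨1, one_mem _, one_ne_zero, by rw [hq, div_zero, mul_zero]; exact zero_mem _⟩
  · refine ⟨_, aeval_mem_algebraAdjoin' q, hq, ?_⟩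
    rw [mul_div_cancel₀ _ hq]
    exact aeval_mem_algebraAdjoin' r

lemma isAlgebraic_algebraAdjoin_of_adjoin' (s : Set L) {a : L}
    (h : IsAlgebraic (adjoin F s) a) : IsAlgebraic (Algebra.adjoin F s) a := by
  classical
  obtain ⟨p, hp, hpa⟩ := h
  have key : ∀ u : Finset ℕ, ∃ d ∈ Algebra.adjoin F s, d ≠ 0 ∧
      ∀ i ∈ u, d * (p.coeff i : L) ∈ Algebra.adjoin F s := by
    intro u
    induction u using Finset.induction_on with
    | empty => exact ⟨1, one_mem _, one_ne_zero, by simp⟩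
    | @insert j u hj ih =>
      obtain ⟨d, hdmem, hd0, hd⟩ := ih
      obtain ⟨e, hemem, he0, he⟩ := exists_denom' s (p.coeff j).2
      refine ⟨d * e, mul_mem hdmem hemem, mul_ne_zero hd0 he0, ?_⟩
      intro i hi
      rcases Finset.mem_insert.1 hi with rfl | hi
      · have : d * e * (p.coeff i : L) = d * (e * (p.coeff i : L)) := by ring
        rw [this]; exact mul_mem hdmem he
      · have : d * e * (p.coeff i : L) = (d * (p.coeff i : L)) * e := by ring
        rw [this]; exact mul_mem (hd i hi) hemem
  obtain ⟨d, hdmem, hd0, hd⟩ := key p.support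
  set R := Algebra.adjoin F s with hR
  let c : ℕ → R := fun i => if h : i ∈ p.support then ⟨d * (p.coeff i : L), hd i h⟩ else 0
  let q : Polynomial R := ∑ i ∈ p.support, Polynomial.monomial i (c i)
  have hcoeff : ∀ k, q.coeff k = if k ∈ p.support then c k else 0 := by
    intro k
    simp only [q, Polynomial.finset_sum_coeff, Polynomial.coeff_monomial]
    exact Finset.sum_ite_eq' p.support k c
  have hn : p.natDegree ∈ p.support := p.natDegree_mem_support_of_nonzero hp
  have hq0 : q ≠ 0 := by
    intro h0
    have := hcoeff p.natDegree
    rw [h0, if_pos hn] at this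
    have hcn : ((c p.natDegree : R) : L) = d * (p.coeff p.natDegree : L) := by
      simp only [c]; rw [dif_pos hn]
    have hval : (0 : L) = d * (p.coeff p.natDegree : L) := by
      rw [← hcn, ← this]; simp
    have : (p.coeff p.natDegree : L) ≠ 0 := by
      simpa using Polynomial.mem_support_iff.1 hn
    exact this (by
      rcases mul_eq_zero.1 hval.symm with h | h
      · exact absurd h hd0
      · exact h)
  refine ⟨q, hq0, ?_⟩
  have hP : (Polynomial.aeval a) p = ∑ i ∈ p.support, (p.coeff i : L) * a ^ i := by
    conv_lhs => rw [p.as_sum_support]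
    rw [map_sum]
    simp [Polynomial.aeval_monomial, IntermediateField.algebraMap_apply]
  have hQ : (Polynomial.aeval a) q = ∑ i ∈ p.support, (d * (p.coeff i : L)) * a ^ i := by
    simp only [q, map_sum, Polynomial.aeval_monomial]
    refine Finset.sum_congr rfl fun i hi => ?_
    have : (algebraMap R L) (c i) = d * (p.coeff i : L) := by
      simp only [c, Subalgebra.algebraMap_eq]
      rw [dif_pos hi]
      rfl
    rw [this]
  rw [hQ]
  have : ∑ i ∈ p.support, (d * (p.coeff i : L)) * a ^ i
      = d * ∑ i ∈ p.support, (p.coeff i : L) * a ^ i := by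
    rw [Finset.mul_sum]
    exact Finset.sum_congr rfl fun i _ => mul_assoc _ _ _
  rw [this, ← hP, hpa, mul_zero]

lemma isAlgebraic_adjoin_of_algebraAdjoin' (s : Set L) {a : L}
    (h : IsAlgebraic (Algebra.adjoin F s) a) : IsAlgebraic (adjoin F s) a :=
  h.tower_top_of_subalgebra_le (IntermediateField.algebra_adjoin_le_adjoin F s)

lemma isAlgebraic_mono' {E₁ E₂ : IntermediateField F L} (h : E₁ ≤ E₂) {x : L}
    (hx : IsAlgebraic E₁ x) : IsAlgebraic E₂ x :=
  hx.tower_top_of_subalgebra_le (show E₁.toSubalgebra ≤ E₂.toSubalgebra from h)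

lemma transc_swap' {a b : L} (ha : Transcendental F a) (hab : IsAlgebraic F⟮b⟯ a) :
    IsAlgebraic F⟮a⟯ b := by
  by_contra hb
  have hb : Transcendental (↥F⟮a⟯) b := hb
  have hbF : Transcendental F b := hb.restrictScalars (algebraMap F F⟮a⟯).injective
  have hb' : Transcendental (Algebra.adjoin F ({a} : Set L)) b := fun H =>
    hb (isAlgebraic_adjoin_of_algebraAdjoin' {a} H)
  have hxa : AlgebraicIndependent F (fun _ : Unit => a) :=
    algebraicIndependent_unique_type_iff.2 ha
  have hpair : AlgebraicIndependent F (fun o : Option Unit => o.elim b (fun _ : Unit => a)) := by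
    rw [hxa.option_iff_transcendental]
    rwa [Set.range_const]
  have hswap : AlgebraicIndependent F (fun o : Option Unit => o.elim a (fun _ : Unit => b)) := by
    have h2 := hpair.comp (Equiv.swap none (some ())) (Equiv.injective _)
    convert h2 using 1
    funext o
    rcases o with _ | u
    · simp
    · simp
  have hxb : AlgebraicIndependent F (fun _ : Unit => b) :=
    algebraicIndependent_unique_type_iff.2 hbF
  have h3 := (hxb.option_iff_transcendental a).1 hswap
  rw [Set.range_const] at h3
  exact h3 (isAlgebraic_algebraAdjoin_of_adjoin' {b} hab)

variable [DecidableEq L]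

lemma transcendental_adjoin_erase' {t : Finset L}
    (ht : AlgebraicIndependent F (Subtype.val : ↥(t : Set L) → L)) {a : L} (hat : a ∈ t) :
    Transcendental (adjoin F ((t.erase a : Finset L) : Set L)) a := by
  intro H
  have H' : IsAlgebraic (Algebra.adjoin F ((t.erase a : Finset L) : Set L)) a :=
    isAlgebraic_algebraAdjoin_of_adjoin' _ H
  have hmono : AlgebraicIndependent F (Subtype.val : ↥((t.erase a : Finset L) : Set L) → L) :=
    ht.mono (by exact_mod_cast Finset.erase_subset a t)
  have hopt : AlgebraicIndependent F
      (fun o : Option ↥((t.erase a : Finset L) : Set L) => o.elim a Subtype.val) := by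
    classical
    let f : Option ↥((t.erase a : Finset L) : Set L) → ↥((t : Finset L) : Set L) :=
      fun o => o.elim ⟨a, hat⟩
        (fun x => ⟨x.1, Finset.mem_of_mem_erase (by exact_mod_cast x.2)⟩)
    have hf : Function.Injective f := by
      rintro (_ | x) (_ | y) h
      · rfl
      · exfalso
        have hy : (y : L) ∈ t.erase a := by exact_mod_cast y.2
        exact Finset.ne_of_mem_erase hy (congrArg Subtype.val h).symm
      · exfalso
        have hx : (x : L) ∈ t.erase a := by exact_mod_cast x.2
        exact Finset.ne_of_mem_erase hx (congrArg Subtype.val h)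
      · have hv : ((f (some x)) : L) = ((f (some y)) : L) := congrArg Subtype.val h
        exact congrArg some (Subtype.ext hv)
    have h2 := ht.comp f hf
    convert h2 using 1
    funext o
    rcases o with _ | x <;> rfl
  have h3 := (hmono.option_iff_transcendental a).1 hopt
  rw [Subtype.range_coe] at h3
  exact h3 H'

lemma steinitz' {t : Finset L} (ht : AlgebraicIndependent F (Subtype.val : ↥(t : Set L) → L)) :
    ∀ (n : ℕ) (s : Finset L), (t \ s).card ≤ n →
      (∀ x ∈ t, IsAlgebraic (adjoin F (s : Set L)) x) → t.card ≤ s.card := by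
  intro n
  induction n with
  | zero =>
    intro s hcard _
    have h0 : (t \ s).card = 0 := Nat.le_zero.1 hcard
    have : t ⊆ s := by
      rw [← Finset.sdiff_eq_empty_iff_subset]
      exact Finset.card_eq_zero.1 h0
    exact Finset.card_le_card this
  | succ n ih =>
    intro s hcard halg
    by_cases hts : t ⊆ s
    · exact Finset.card_le_card hts
    obtain ⟨a, hat, has⟩ := Finset.not_subset.1 hts
    classical
    set P : Finset L → Prop :=
      fun u => IsAlgebraic (adjoin F ((u ∪ s ∩ t : Finset L) : Set L)) a with hP
    have hPs : (s \ t) ∈ (s \ t).powerset.filter P := by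
      rw [Finset.mem_filter]
      refine ⟨Finset.mem_powerset_self _, ?_⟩
      show IsAlgebraic (adjoin F (((s \ t) ∪ s ∩ t : Finset L) : Set L)) a
      have hunion : (s \ t) ∪ s ∩ t = s := Finset.sdiff_union_inter s t
      rw [hunion]
      exact halg a hat
    obtain ⟨u, hu, humin⟩ := Finset.exists_min_image _ Finset.card ⟨_, hPs⟩
    rw [Finset.mem_filter, Finset.mem_powerset] at hu
    obtain ⟨hust, hua⟩ := hu
    have hune : u.Nonempty := by
      rw [Finset.nonempty_iff_ne_empty]
      rintro rfl
      have hsub : ((∅ ∪ s ∩ t : Finset L) : Set L) ⊆ ((t.erase a : Finset L) : Set L) := by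
        intro x hx
        simp only [Finset.empty_union, Finset.coe_inter, Set.mem_inter_iff,
          Finset.mem_coe] at hx
        simp only [Finset.coe_erase, Set.mem_diff, Finset.mem_coe, Set.mem_singleton_iff]
        exact ⟨hx.2, fun hxa => has (hxa ▸ hx.1)⟩
      exact transcendental_adjoin_erase' ht hat
        (isAlgebraic_mono' (IntermediateField.adjoin.mono _ _ _ hsub) hua)
    obtain ⟨b, hbu⟩ := hune
    have hbst : b ∈ s \ t := hust hbu
    have hbs : b ∈ s := (Finset.mem_sdiff.1 hbst).1
    have hbt : b ∉ t := (Finset.mem_sdiff.1 hbst).2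
    set v : Finset L := u.erase b ∪ s ∩ t with hv
    set E : IntermediateField F L := adjoin F (v : Set L) with hE
    have htransc : Transcendental E a := by
      intro Halg
      have hmem : u.erase b ∈ (s \ t).powerset.filter P := by
        rw [Finset.mem_filter, Finset.mem_powerset]
        exact ⟨(Finset.erase_subset _ _).trans hust, Halg⟩
      have := humin _ hmem
      have hlt : (u.erase b).card < u.card := Finset.card_erase_lt_of_mem hbu
      omega
    have halgEb : IsAlgebraic E⟮b⟯ a := by
      have hins : (u ∪ s ∩ t : Finset L) = insert b v := by
        rw [hv, ← Finset.insert_union, Finset.insert_erase hbu]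
      have h1 : IsAlgebraic (adjoin F (((insert b v : Finset L)) : Set L)) a := by
        rw [← hins]; exact hua
      have h2 : ((insert b v : Finset L) : Set L) = (v : Set L) ∪ {b} := by
        rw [Finset.coe_insert, Set.union_singleton]
      rw [h2] at h1
      rw [← IntermediateField.adjoin_adjoin_left F (v : Set L) {b}] at h1
      exact h1
    have hba : IsAlgebraic E⟮a⟯ b := transc_swap' htransc halgEb
    set s' : Finset L := insert a (s.erase b) with hs'
    set E' : IntermediateField F L := adjoin F (s' : Set L) with hE'
    have hvs : (v : Set L) ⊆ ((s.erase b : Finset L) : Set L) := by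
      intro x hx
      simp only [hv, Finset.coe_union, Set.mem_union, Finset.coe_erase, Finset.coe_inter,
        Set.mem_diff, Set.mem_inter_iff, Finset.mem_coe, Set.mem_singleton_iff] at hx ⊢
      rcases hx with ⟨hxu, hxb⟩ | ⟨hxs, hxt⟩
      · exact ⟨(Finset.mem_sdiff.1 (hust hxu)).1, hxb⟩
      · exact ⟨hxs, fun h => hbt (h ▸ hxt)⟩
    have hE'b : IsAlgebraic E' b := by
      have h1 : IsAlgebraic (adjoin F ((v : Set L) ∪ {a})) b := by
        rw [← IntermediateField.adjoin_adjoin_left F (v : Set L) {a}]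
        exact hba
      refine isAlgebraic_mono' (IntermediateField.adjoin.mono _ _ _ ?_) h1
      rintro x (hx | hx)
      · have hx2 := hvs hx
        simp only [hs', Finset.coe_insert, Set.mem_insert_iff]
        exact Or.inr hx2
      · have : x = a := hx
        simp [hs', this]
    have hbint : IsIntegral E' b := isAlgebraic_iff_isIntegral.1 hE'b
    haveI : Algebra.IsIntegral E' ↥E'⟮b⟯ :=
      Algebra.isAlgebraic_iff_isIntegral.1 (IntermediateField.isAlgebraic_adjoin_simple hbint)
    have hstep : ∀ x ∈ t, IsAlgebraic E' x := by
      intro x hx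
      have h1 : IsAlgebraic (adjoin F ((s' : Set L) ∪ {b})) x := by
        refine isAlgebraic_mono' (IntermediateField.adjoin.mono _ _ _ ?_) (halg x hx)
        intro y hy
        by_cases hyb : y = b
        · exact Or.inr (by simp [hyb])
        · refine Or.inl ?_
          simp only [hs', Finset.coe_insert, Set.mem_insert_iff]
          exact Or.inr (by simp only [Finset.coe_erase, Set.mem_diff, Finset.mem_coe,
            Set.mem_singleton_iff]; exact ⟨hy, hyb⟩)
      rw [← IntermediateField.adjoin_adjoin_left F (s' : Set L) {b}] at h1
      have h2 : IsIntegral E'⟮b⟯ x := isAlgebraic_iff_isIntegral.1 h1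
      exact (isIntegral_trans (R := E') x h2).isAlgebraic
    have hcard' : s'.card = s.card := by
      rw [hs', Finset.card_insert_of_notMem (fun h => has (Finset.mem_of_mem_erase h)),
        Finset.card_erase_of_mem hbs]
      have : 1 ≤ s.card := Finset.card_pos.2 ⟨b, hbs⟩
      omega
    have hsub : t \ s' ⊆ t \ s := by
      intro x hx
      rw [Finset.mem_sdiff] at hx ⊢
      refine ⟨hx.1, fun hxs => hx.2 ?_⟩
      have hxb : x ≠ b := fun h => hbt (h ▸ hx.1)
      simp only [hs', Finset.mem_insert, Finset.mem_erase]
      exact Or.inr ⟨hxb, hxs⟩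
    have hssub : t \ s' ⊂ t \ s := by
      refine ⟨hsub, fun hsup => ?_⟩
      have ha1 : a ∈ t \ s := Finset.mem_sdiff.2 ⟨hat, has⟩
      have ha2 := hsup ha1
      rw [Finset.mem_sdiff] at ha2
      exact ha2.2 (by simp [hs'])
    have hlt : (t \ s').card < (t \ s).card := Finset.card_lt_card hssub
    have := ih s' (by omega) hstep
    omega

end Helpers

section Kernel

lemma quot_ker' {K : Type*} [Field K] {n : ℕ} (Q : Ideal (MvPolynomial (Fin n) K)) [Q.IsPrime]
    (f : MvPolynomial (Fin n) K) :
    MvPolynomial.aeval (fun i => algebraMap (MvPolynomial (Fin n) K ⧸ Q)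
      (FractionRing (MvPolynomial (Fin n) K ⧸ Q)) (Ideal.Quotient.mk Q (MvPolynomial.X i))) f = 0
      ↔ f ∈ Q := by
  have hy : (MvPolynomial.aeval (fun i => algebraMap (MvPolynomial (Fin n) K ⧸ Q)
        (FractionRing (MvPolynomial (Fin n) K ⧸ Q)) (Ideal.Quotient.mk Q (MvPolynomial.X i))) :
        MvPolynomial (Fin n) K →ₐ[K] FractionRing (MvPolynomial (Fin n) K ⧸ Q))
      = (IsScalarTower.toAlgHom K _ _).comp (Ideal.Quotient.mkₐ K Q) := by
    apply MvPolynomial.algHom_ext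
    intro i
    simp
  rw [hy]
  show algebraMap (MvPolynomial (Fin n) K ⧸ Q) (FractionRing (MvPolynomial (Fin n) K ⧸ Q))
      (Ideal.Quotient.mk Q f) = 0 ↔ _
  rw [map_eq_zero_iff _ (IsFractionRing.injective (MvPolynomial (Fin n) K ⧸ Q)
      (FractionRing (MvPolynomial (Fin n) K ⧸ Q))), Ideal.Quotient.eq_zero_iff_mem]

end Kernel

section Aux

theorem algMatroid_aux {K L : Type*} [Field K] [Field L] [Algebra K L] {n : ℕ}
    (I : Ideal (MvPolynomial (Fin n) K)) (hI : I.IsPrimary) (y : Fin n → L)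
    (hker : ∀ f, MvPolynomial.aeval y f = 0 ↔ f ∈ I.radical) :
    ∃ M : Matroid (Fin n), M.E = Set.univ ∧
      (∀ J : Set (Fin n),
        M.Indep J ↔ ∀ f ∈ I, f ∈ MvPolynomial.supported K J → f = 0) ∧
      (∀ J₁ J₂ : Set (Fin n),
        Maximal (fun J : Set (Fin n) => ∀ f ∈ I, f ∈ MvPolynomial.supported K J → f = 0) J₁ →
        Maximal (fun J : Set (Fin n) => ∀ f ∈ I, f ∈ MvPolynomial.supported K J → f = 0) J₂ →
        J₁.ncard = J₂.ncard) := by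
  classical
  set P : Set (Fin n) → Prop :=
    fun J => ∀ f ∈ I, f ∈ MvPolynomial.supported K J → f = 0 with hPdef
  have hrad : ∀ J : Set (Fin n), P J → ∀ f ∈ I.radical, f ∈ MvPolynomial.supported K J → f = 0 := by
    intro J h f hf hs
    rw [Ideal.mem_radical_iff] at hf
    obtain ⟨m, hm⟩ := hf
    have hm0 : f ^ m = 0 := h _ hm (pow_mem hs m)
    have hmne : m ≠ 0 := by
      rintro rfl
      rw [pow_zero] at hm
      exact (Ideal.isPrimary_iff.1 hI).1 (I.eq_top_iff_one.2 hm)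
    exact (pow_eq_zero_iff hmne).1 hm0
  have hcomp : ∀ (J : Set (Fin n)) (p : MvPolynomial J K),
      MvPolynomial.aeval (J.restrict y) p
        = MvPolynomial.aeval y (MvPolynomial.rename (Subtype.val : J → Fin n) p) := by
    intro J p
    rw [MvPolynomial.aeval_rename]
    rfl
  have hP : ∀ J : Set (Fin n), P J ↔ AlgebraicIndependent K (J.restrict y) := by
    intro J
    rw [algebraicIndependent_iff_injective_aeval]
    constructor
    · intro h
      rw [injective_iff_map_eq_zero]
      intro p hp
      rw [hcomp] at hp
      have h1 : MvPolynomial.rename (Subtype.val : J → Fin n) p ∈ I.radical := (hker _).1 hp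
      have h2 : MvPolynomial.rename (Subtype.val : J → Fin n) p ∈ MvPolynomial.supported K J := by
        rw [MvPolynomial.supported_eq_range_rename]; exact ⟨p, rfl⟩
      have h3 := hrad J h _ h1 h2
      exact MvPolynomial.rename_injective _ Subtype.val_injective (by rw [h3, map_zero])
    · intro h f hfI hfs
      rw [MvPolynomial.supported_eq_range_rename] at hfs
      obtain ⟨p, rfl⟩ := hfs
      have h1 : MvPolynomial.aeval (J.restrict y) p = 0 := by
        rw [hcomp]
        exact (hker _).2 (Ideal.le_radical hfI)
      have h2 : p = 0 := by
        apply h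
        rw [h1, map_zero]
      rw [h2, map_zero]
  have hempty : P ∅ := by
    rw [hP]
    haveI : IsEmpty ↥(∅ : Set (Fin n)) := by
      simp only [Set.isEmpty_coe_sort]
    exact algebraicIndependent_empty_type
  have hmono : ∀ ⦃J₁ J₂ : Set (Fin n)⦄, P J₂ → J₁ ⊆ J₂ → P J₁ := by
    intro J₁ J₂ h hsub f hfI hfs
    exact h f hfI (MvPolynomial.supported_mono hsub hfs)
  have haug : ∀ ⦃J₁ J₂ : Set (Fin n)⦄, P J₁ → P J₂ → J₁.ncard < J₂.ncard →
      ∃ e ∈ J₂, e ∉ J₁ ∧ P (insert e J₁) := by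
    intro J₁ J₂ h₁ h₂ hlt
    by_contra hcon
    push_neg at hcon
    have ind₁ : AlgebraicIndependent K (J₁.restrict y) := (hP J₁).1 h₁
    have ind₂ : AlgebraicIndependent K (J₂.restrict y) := (hP J₂).1 h₂
    have hinj₁ : Set.InjOn y J₁ := by
      intro a ha b hb hab
      exact congrArg Subtype.val
        (ind₁.injective (show J₁.restrict y ⟨a, ha⟩ = J₁.restrict y ⟨b, hb⟩ from hab))
    have hinj₂ : Set.InjOn y J₂ := by
      intro a ha b hb hab
      exact congrArg Subtype.val
        (ind₂.injective (show J₂.restrict y ⟨a, ha⟩ = J₂.restrict y ⟨b, hb⟩ from hab))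
    set s : Finset L := (J₁.toFinite.image y).toFinset with hs
    set t : Finset L := (J₂.toFinite.image y).toFinset with htdef
    have hss : (s : Set L) = y '' J₁ := Set.Finite.coe_toFinset _
    have hts : (t : Set L) = y '' J₂ := Set.Finite.coe_toFinset _
    have htind : AlgebraicIndependent K (Subtype.val : ↥(t : Set L) → L) := by
      rw [hts]
      have := ind₂.image
      convert this using 1
    have halg : ∀ x ∈ t, IsAlgebraic (adjoin K (s : Set L)) x := by
      intro x hx
      have hx' : x ∈ y '' J₂ := by rw [← hts]; exact_mod_cast hx
      obtain ⟨e, heJ₂, rfl⟩ := hx'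
      by_cases heJ₁ : e ∈ J₁
      · have hmem : y e ∈ adjoin K (s : Set L) := by
          apply IntermediateField.subset_adjoin
          rw [hss]; exact ⟨e, heJ₁, rfl⟩
        exact isAlgebraic_algebraMap (⟨y e, hmem⟩ : ↥(adjoin K (s : Set L)))
      · have hnP := hcon e heJ₂ heJ₁
        have hnind : ¬ AlgebraicIndependent K ((insert e J₁).restrict y) := fun hind =>
          hnP ((hP _).2 hind)
        have hnopt : ¬ AlgebraicIndependent K
            (fun o : Option ↥J₁ => o.elim (y e) (J₁.restrict y)) := by
          intro hopt
          apply hnind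
          let g : ↥(insert e J₁) → Option ↥J₁ :=
            fun x => if h : (x : Fin n) ∈ J₁ then some ⟨x, h⟩ else none
          have hg : Function.Injective g := by
            rintro ⟨x, hx⟩ ⟨z, hz⟩ h
            apply Subtype.ext
            by_cases h1 : x ∈ J₁ <;> by_cases h2 : z ∈ J₁
            · simpa [g, h1, h2, Subtype.ext_iff] using h
            · simp [g, h1, h2] at h
            · simp [g, h1, h2] at h
            · have hx' : x = e := (Set.mem_insert_iff.1 hx).resolve_right h1
              have hz' : z = e := (Set.mem_insert_iff.1 hz).resolve_right h2
              show x = z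
              rw [hx', hz']
          have hcompg := hopt.comp g hg
          convert hcompg using 1
          funext x
          simp only [Function.comp_apply, g]
          by_cases h : (x : Fin n) ∈ J₁
          · rw [dif_pos h]; rfl
          · rw [dif_neg h]
            have hx : (x : Fin n) = e := by
              rcases x.2 with hx | hx
              · exact hx
              · exact absurd hx h
            show y x = y e
            rw [hx]
        rw [ind₁.option_iff_transcendental (y e)] at hnopt
        have hAlg : IsAlgebraic (Algebra.adjoin K (Set.range (J₁.restrict y))) (y e) :=
          not_not.1 hnopt
        rw [show Set.range (J₁.restrict y) = y '' J₁ from Set.range_domRestrict y J₁] at hAlg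
        exact isAlgebraic_adjoin_of_algebraAdjoin' _ (by rw [hss]; exact hAlg)
    have hcard := steinitz' htind (t \ s).card s le_rfl halg
    have hsc : s.card = J₁.ncard := by
      rw [hs, ← Set.ncard_eq_toFinset_card _ (J₁.toFinite.image y),
        Set.ncard_image_of_injOn hinj₁]
    have htc : t.card = J₂.ncard := by
      rw [htdef, ← Set.ncard_eq_toFinset_card _ (J₂.toFinite.image y),
        Set.ncard_image_of_injOn hinj₂]
    omega
  -- assemble the matroid
  refine ⟨(IndepMatroid.ofFinite (Set.finite_univ : (Set.univ : Set (Fin n)).Finite) P hempty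
      hmono haug (fun J _ => Set.subset_univ J)).matroid, rfl, fun J => Iff.rfl, ?_⟩
  intro J₁ J₂ hm₁ hm₂
  set M := (IndepMatroid.ofFinite (Set.finite_univ : (Set.univ : Set (Fin n)).Finite) P hempty
      hmono haug (fun J _ => Set.subset_univ J)).matroid with hM
  have hIeq : M.Indep = P := rfl
  have hB : ∀ J, Maximal P J → M.IsBase J := by
    intro J hJ
    rw [Matroid.isBase_iff_maximal_indep, hIeq]
    exact hJ
  exact (hB _ hm₁).ncard_eq_ncard_of_isBase (hB _ hm₂)

end Aux

/-- For a primary ideal `I ⊆ K[x₁,…,xₙ]`, the sets `J ⊆ {1,…,n}` of variables with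
`I ∩ K[x_j : j ∈ J] = {0}` are the independent sets of a matroid; in particular all
maximal such sets have the same cardinality. -/
theorem stmt_5 {K : Type*} [Field K] (n : ℕ) (I : Ideal (MvPolynomial (Fin n) K))
    (hI : I.IsPrimary) :
    ∃ M : Matroid (Fin n), M.E = Set.univ ∧
      (∀ J : Set (Fin n),
        M.Indep J ↔ ∀ f ∈ I, f ∈ MvPolynomial.supported K J → f = 0) ∧
      (∀ J₁ J₂ : Set (Fin n),
        Maximal (fun J : Set (Fin n) => ∀ f ∈ I, f ∈ MvPolynomial.supported K J → f = 0) J₁ →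
        Maximal (fun J : Set (Fin n) => ∀ f ∈ I, f ∈ MvPolynomial.supported K J → f = 0) J₂ →
        J₁.ncard = J₂.ncard) := by
  haveI : I.radical.IsPrime := Ideal.isPrime_radical hI
  exact algMatroid_aux I hI _ (quot_ker' I.radical)
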